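/- Let q be an odd prime power and n ≥ 1. Two invertible symmetric n×n matrices A, B over 𝔽_q are congruent (i.e. there exists g ∈ GL_n(𝔽_q) with ᵗg·A·g = B) if and only if det A and det B lie in the same class of 𝔽_q^× / (𝔽_q^×)², i.e. (det A)/(det B) is a square in 𝔽_q^×. -/

import Mathlib

open Matrix Polynomial

section Aux

variable {F : Type*} [Field F] {ι : Type*} [Fintype ι] [DecidableEq ι]

/-- Congruence of matrices. -/
def MCong (A B : Matrix ι ι F) : Prop :=
  ∃ g : Matrix ι ι F, IsUnit g.det ∧ gᵀ * A * g = B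

lemma sum_two {f : ι → F} {i j : ι} (hij : i ≠ j)
    (h : ∀ p, p ≠ i → p ≠ j → f p = 0) : ∑ p, f p = f i + f j := by
  rw [← Finset.sum_subset (Finset.subset_univ {i, j})]
  · rw [Finset.sum_pair hij]
  · intro p _ hp
    simp only [Finset.mem_insert, Finset.mem_singleton] at hp
    push_neg at hp
    exact h p hp.1 hp.2

lemma exists_xy [Fintype F] (hodd : Fintype.card F % 2 = 1) {a b : F} (ha : a ≠ 0) (hb : b ≠ 0) :
    ∃ x y : F, a * x ^ 2 + b * y ^ 2 = 1 := by
  have hdf : degree (C a * X ^ 2) = 2 := by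
    rw [degree_C_mul_X_pow 2 ha]; rfl
  have hdg : degree (C b * X ^ 2 - C 1) = 2 := by
    rw [degree_sub_eq_left_of_degree_lt, degree_C_mul_X_pow 2 hb]
    · rfl
    · rw [degree_C_mul_X_pow 2 hb]
      exact lt_of_le_of_lt degree_C_le (by norm_num)
  obtain ⟨x, y, hxy⟩ := FiniteField.exists_root_sum_quadratic hdf hdg hodd
  refine ⟨x, y, ?_⟩
  simp only [eval_sub, eval_mul, eval_pow, eval_C, eval_X] at hxy
  linear_combination hxy

section Surgery

/-- The surgery matrix acting on coordinates `i, j`. -/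
def sg (d : ι → F) (i j : ι) (x y : F) : Matrix ι ι F := Matrix.of fun p q =>
  if q = i then (if p = i then x else if p = j then y else 0)
  else if q = j then (if p = i then -(d j * y) else if p = j then d i * x else 0)
  else if p = q then 1 else 0

variable (d : ι → F) {i j : ι} (x y : F)

lemma sg_ii : sg d i j x y i i = x := by simp [sg]
lemma sg_ji (hij : i ≠ j) : sg d i j x y j i = y := by simp [sg, hij.symm]
lemma sg_ij (hij : i ≠ j) : sg d i j x y i j = -(d j * y) := by simp [sg, hij.symm]
lemma sg_jj (hij : i ≠ j) : sg d i j x y j j = d i * x := by simp [sg, hij.symm]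

set_option linter.unusedSectionVars false in
lemma surgery (hij : i ≠ j) (hxy : d i * x ^ 2 + d j * y ^ 2 = 1) :
    (sg d i j x y)ᵀ * diagonal d * (sg d i j x y) =
      diagonal (Function.update (Function.update d i 1) j (d i * d j)) := by
  ext k l
  have expand : (((sg d i j x y)ᵀ * diagonal d) * (sg d i j x y)) k l
      = ∑ p, (sg d i j x y) p k * (d p * (sg d i j x y) p l) := by
    rw [Matrix.mul_assoc, Matrix.mul_apply]
    refine Finset.sum_congr rfl fun p _ => ?_
    rw [Matrix.transpose_apply, Matrix.diagonal_mul]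
  rw [expand]
  by_cases hli : i = l
  · subst hli
    have hsupp : ∀ p, p ≠ i → p ≠ j → (sg d i j x y) p k * (d p * (sg d i j x y) p i) = 0 := by
      intro p hpi hpj
      simp [sg, hpi, hpj]
    rw [sum_two hij hsupp]
    by_cases hki : i = k
    · subst hki
      rw [sg_ii, sg_ji d x y hij, Matrix.diagonal_apply_eq,
        Function.update_apply, if_neg hij, Function.update_self]
      linear_combination hxy
    · by_cases hkj : j = k
      · subst hkj
        rw [sg_ii, sg_ji d x y hij, sg_ij d x y hij, sg_jj d x y hij,
          Matrix.diagonal_apply_ne _ hij.symm]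
        ring
      · have h1 : (sg d i j x y) i k = 0 := by simp [sg, Ne.symm hki, Ne.symm hkj, hki, hkj]
        have h2 : (sg d i j x y) j k = 0 := by simp [sg, Ne.symm hki, Ne.symm hkj, hki, hkj]
        rw [h1, h2, Matrix.diagonal_apply_ne _ (Ne.symm hki)]
        ring
  · by_cases hlj : j = l
    · subst hlj
      have hsupp : ∀ p, p ≠ i → p ≠ j → (sg d i j x y) p k * (d p * (sg d i j x y) p j) = 0 := by
        intro p hpi hpj
        simp [sg, hpi, hpj]
      rw [sum_two hij hsupp]
      by_cases hki : i = k
      · subst hki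
        rw [sg_ii, sg_ji d x y hij, sg_ij d x y hij, sg_jj d x y hij,
          Matrix.diagonal_apply_ne _ hij]
        ring
      · by_cases hkj : j = k
        · subst hkj
          rw [sg_ij d x y hij, sg_jj d x y hij, Matrix.diagonal_apply_eq,
            Function.update_self]
          linear_combination (d i * d j) * hxy
        · have h1 : (sg d i j x y) i k = 0 := by simp [sg, Ne.symm hki, Ne.symm hkj, hki, hkj]
          have h2 : (sg d i j x y) j k = 0 := by simp [sg, Ne.symm hki, Ne.symm hkj, hki, hkj]
          rw [h1, h2, Matrix.diagonal_apply_ne _ (Ne.symm hkj)]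
          ring
    · have hsupp : ∀ p, p ≠ l → (sg d i j x y) p k * (d p * (sg d i j x y) p l) = 0 := by
        intro p hpl
        simp [sg, Ne.symm hli, Ne.symm hlj, hpl]
      rw [Finset.sum_eq_single l (fun p _ h => hsupp p h) (by simp)]
      have hll : (sg d i j x y) l l = 1 := by simp [sg, Ne.symm hli, Ne.symm hlj]
      by_cases hk : k = l
      · subst hk
        rw [hll, Matrix.diagonal_apply_eq, Function.update_apply, if_neg (Ne.symm hlj),
          Function.update_apply, if_neg (Ne.symm hli)]
        ring
      · have hlk : (sg d i j x y) l k = 0 := by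
          simp only [sg, Matrix.of_apply]
          by_cases hki : k = i
          · subst hki; simp [Ne.symm hli, Ne.symm hlj]
          · by_cases hkj : k = j
            · subst hkj; simp [Ne.symm hli, Ne.symm hlj, hki]
            · simp [hki, hkj, Ne.symm hk]
        rw [hlk, Matrix.diagonal_apply_ne _ hk]
        ring

end Surgery


lemma mcong_refl (A : Matrix ι ι F) : MCong A A :=
  ⟨1, by simp, by simp⟩

lemma mcong_trans {A B C : Matrix ι ι F} (h1 : MCong A B) (h2 : MCong B C) : MCong A C := by
  obtain ⟨g, hg, rfl⟩ := h1
  obtain ⟨h, hh, rfl⟩ := h2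
  exact ⟨g * h, by rw [Matrix.det_mul]; exact hg.mul hh,
    by rw [transpose_mul]; simp only [Matrix.mul_assoc]⟩

lemma mcong_symm {A B : Matrix ι ι F} (h : MCong A B) : MCong B A := by
  obtain ⟨g, hg, rfl⟩ := h
  refine ⟨g⁻¹, ?_, ?_⟩
  · rwa [Matrix.det_nonsing_inv, isUnit_ringInverse]
  · rw [Matrix.transpose_nonsing_inv]
    calc (gᵀ)⁻¹ * (gᵀ * A * g) * g⁻¹ = (gᵀ)⁻¹ * gᵀ * A * (g * g⁻¹) := by
          simp only [Matrix.mul_assoc]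
    _ = A := by
        rw [Matrix.nonsing_inv_mul _ (by simpa using hg), Matrix.mul_nonsing_inv _ hg]
        simp

lemma mcong_det {A B : Matrix ι ι F} (h : MCong A B) :
    ∃ u : F, u ≠ 0 ∧ B.det = A.det * u ^ 2 := by
  obtain ⟨g, hg, rfl⟩ := h
  refine ⟨g.det, by simpa [isUnit_iff_ne_zero] using hg, ?_⟩
  rw [Matrix.det_mul, Matrix.det_mul, Matrix.det_transpose]
  ring

lemma mcong_diag_scale (d u : ι → F) (hu : ∀ i, u i ≠ 0) :
    MCong (diagonal d) (diagonal fun i => u i ^ 2 * d i) := by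
  refine ⟨diagonal u, ?_, ?_⟩
  · rw [Matrix.det_diagonal, isUnit_iff_ne_zero]
    exact Finset.prod_ne_zero_iff.2 fun i _ => hu i
  · rw [diagonal_transpose, diagonal_mul_diagonal, diagonal_mul_diagonal]
    congr 1
    funext i
    ring

lemma mcong_surgery [Fintype F] (hodd : Fintype.card F % 2 = 1) (d : ι → F)
    (hd : ∀ p, d p ≠ 0) {i j : ι} (hij : i ≠ j) :
    MCong (diagonal d)
      (diagonal (Function.update (Function.update d i 1) j (d i * d j))) := by
  obtain ⟨x, y, hxy⟩ := exists_xy hodd (hd i) (hd j)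
  have hs := surgery d x y hij hxy
  refine ⟨sg d i j x y, ?_, hs⟩
  have hdet := congrArg Matrix.det hs
  rw [Matrix.det_mul, Matrix.det_mul, Matrix.det_transpose, Matrix.det_diagonal,
    Matrix.det_diagonal] at hdet
  rw [isUnit_iff_ne_zero]
  intro h0
  rw [h0] at hdet
  simp only [zero_mul, mul_zero] at hdet
  have : ∏ p, Function.update (Function.update d i 1) j (d i * d j) p ≠ 0 := by
    refine Finset.prod_ne_zero_iff.2 fun p _ => ?_
    rw [Function.update_apply]
    split
    · exact mul_ne_zero (hd i) (hd j)
    · rw [Function.update_apply]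
      split
      · exact one_ne_zero
      · exact hd p
  exact this hdet.symm

lemma prod_update (f : ι → F) (i : ι) (b : F) :
    ∏ q, Function.update f i b q = b * ∏ q ∈ Finset.univ.erase i, f q := by
  rw [← Finset.mul_prod_erase Finset.univ (Function.update f i b) (Finset.mem_univ i),
    Function.update_self]
  refine congrArg _ (Finset.prod_congr rfl fun q hq => ?_)
  rw [Function.update_apply, if_neg (Finset.ne_of_mem_erase hq)]

lemma mcong_normalize [Fintype F] (hodd : Fintype.card F % 2 = 1) (s : Finset ι) :
    ∀ i₀ ∉ s, ∀ d : ι → F, (∀ p, d p ≠ 0) → (∀ p, p ∉ s → p ≠ i₀ → d p = 1) →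
      MCong (diagonal d) (diagonal fun p => if p = i₀ then ∏ q, d q else 1) := by
  induction s using Finset.induction_on with
  | empty =>
    intro i₀ _ d hd h1
    have hde : (fun p => if p = i₀ then ∏ q, d q else 1) = d := by
      funext p
      by_cases hp : p = i₀
      · subst hp
        rw [if_pos rfl, Finset.prod_eq_single p (fun q _ hq => h1 q (by simp) hq) (by simp)]
      · rw [if_neg hp, h1 p (by simp) hp]
    rw [hde]
    exact mcong_refl _
  | @insert a s ha ih =>
    intro i₀ hi₀ d hd h1
    have hai₀ : a ≠ i₀ := fun h => hi₀ (h ▸ Finset.mem_insert_self a s)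
    have hi₀s : i₀ ∉ s := fun h => hi₀ (Finset.mem_insert_of_mem h)
    set d' := Function.update (Function.update d a 1) i₀ (d a * d i₀) with hd'
    have step := mcong_surgery hodd d hd hai₀
    have hd'ne : ∀ p, d' p ≠ 0 := by
      intro p
      rw [hd', Function.update_apply]
      split
      · exact mul_ne_zero (hd a) (hd i₀)
      · rw [Function.update_apply]
        split
        · exact one_ne_zero
        · exact hd p
    have h1' : ∀ p, p ∉ s → p ≠ i₀ → d' p = 1 := by
      intro p hps hpi₀
      rw [hd', Function.update_apply, if_neg hpi₀, Function.update_apply]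
      split
      · rfl
      · next hpa =>
        exact h1 p (by simp [hps, hpa]) hpi₀
    have hprod : ∏ q, d' q = ∏ q, d q := by
      rw [hd', prod_update]
      have hamem : a ∈ Finset.univ.erase i₀ := Finset.mem_erase.2 ⟨hai₀, Finset.mem_univ a⟩
      rw [← Finset.mul_prod_erase _ (Function.update d a 1) hamem, Function.update_self]
      have : ∏ q ∈ (Finset.univ.erase i₀).erase a, Function.update d a 1 q
          = ∏ q ∈ (Finset.univ.erase i₀).erase a, d q := by
        refine Finset.prod_congr rfl fun q hq => ?_
        rw [Function.update_apply, if_neg (Finset.ne_of_mem_erase hq)]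
      rw [this, ← Finset.mul_prod_erase Finset.univ d (Finset.mem_univ i₀),
        ← Finset.mul_prod_erase _ d hamem]
      ring
    have := ih i₀ hi₀s d' hd'ne h1'
    rw [hprod] at this
    exact mcong_trans step this

lemma two_ne_zero_of_oddcard [Fintype F] (hodd : Fintype.card F % 2 = 1) : (2 : F) ≠ 0 := by
  intro h20
  have hdvd : ringChar F ∣ 2 := by
    have := (CharP.cast_eq_zero_iff F (ringChar F) 2).1 (by exact_mod_cast h20)
    exact this
  have hp : (ringChar F).Prime := CharP.char_is_prime F (ringChar F)
  have : ringChar F = 2 := (Nat.prime_dvd_prime_iff_eq hp Nat.prime_two).1 hdvd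
  rw [FiniteField.even_card_iff_char_two.1 this] at hodd
  exact absurd hodd (by norm_num)

set_option maxHeartbeats 1000000 in
lemma mcong_diagonalize [Fintype F] (hodd : Fintype.card F % 2 = 1) {n : ℕ}
    (A : Matrix (Fin n) (Fin n) F) (hA : Aᵀ = A) :
    ∃ d : Fin n → F, MCong A (diagonal d) := by
  haveI : Invertible (2 : F) := invertibleOfNonzero (two_ne_zero_of_oddcard hodd)
  have hsymm : LinearMap.IsSymm (Matrix.toBilin' A) := by
    rw [LinearMap.isSymm_def]
    intro x' y'
    simp only [RingHom.id_apply, Matrix.toBilin'_apply]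
    rw [Finset.sum_comm]
    refine Finset.sum_congr rfl fun i _ => Finset.sum_congr rfl fun j _ => ?_
    have : A i j = A j i := by conv_lhs => rw [← hA, Matrix.transpose_apply]
    rw [this]
    ring
  obtain ⟨v, hv⟩ := LinearMap.BilinForm.exists_orthogonal_basis hsymm
  have hrank : Module.finrank F (Fin n → F) = n := Module.finrank_fin_fun F
  let v' : Module.Basis (Fin n) F (Fin n → F) := v.reindex (finCongr hrank)
  have hv' : ∀ i j : Fin n, i ≠ j → Matrix.toBilin' A (v' i) (v' j) = 0 := by
    intro i j hij
    have h1 : v' i = v ((finCongr hrank).symm i) := Module.Basis.reindex_apply v _ i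
    have h2 : v' j = v ((finCongr hrank).symm j) := Module.Basis.reindex_apply v _ j
    rw [h1, h2]
    exact (LinearMap.isOrthoᵢ_def.1 hv) _ _
      (fun h => hij ((finCongr hrank).symm.injective h))
  set P : Matrix (Fin n) (Fin n) F := (Pi.basisFun F (Fin n)).toMatrix v' with hPdef
  have hPe : ∀ k i, P k i = v' i k := by
    intro k i
    rw [hPdef, Module.Basis.toMatrix_apply, Pi.basisFun_repr]
  have hP : IsUnit P.det := by
    haveI := (Pi.basisFun F (Fin n)).invertibleToMatrix v'
    exact Matrix.isUnit_det_of_invertible P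
  have key : ∀ i j, (Pᵀ * A * P) i j = Matrix.toBilin' A (v' i) (v' j) := by
    intro i j
    rw [Matrix.mul_assoc, Matrix.mul_apply, Matrix.toBilin'_apply]
    refine Finset.sum_congr rfl fun k _ => ?_
    rw [Matrix.transpose_apply, Matrix.mul_apply, hPe, Finset.mul_sum]
    refine Finset.sum_congr rfl fun l _ => ?_
    rw [hPe]
    ring
  refine ⟨fun i => Matrix.toBilin' A (v' i) (v' i), P, hP, ?_⟩
  ext i j
  rw [key]
  by_cases h : i = j
  · subst h
    rw [Matrix.diagonal_apply_eq]
  · rw [Matrix.diagonal_apply_ne _ h, hv' i j h]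

end Aux

open Matrix

theorem stmt_13 (F : Type*) [Field F] [Fintype F] (hodd : Odd (Fintype.card F))
    (n : ℕ) (hn : 1 ≤ n) (A B : Matrix (Fin n) (Fin n) F)
    (hAsymm : Aᵀ = A) (hBsymm : Bᵀ = B)
    (hAunit : IsUnit A.det) (hBunit : IsUnit B.det) :
    (∃ g : Matrix (Fin n) (Fin n) F, IsUnit g.det ∧ gᵀ * A * g = B) ↔
      IsSquare (A.det / B.det) := by
  have hA0 : A.det ≠ 0 := by simpa [isUnit_iff_ne_zero] using hAunit
  have hB0 : B.det ≠ 0 := by simpa [isUnit_iff_ne_zero] using hBunit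
  have hcard : Fintype.card F % 2 = 1 := Nat.odd_iff.1 hodd
  constructor
  · intro h
    obtain ⟨u, hu, hdet⟩ := mcong_det (h : MCong A B)
    refine ⟨u⁻¹, ?_⟩
    rw [hdet, div_mul_eq_div_div, div_self hA0, one_div, sq, mul_inv]
  · intro hsq
    obtain ⟨s, hs⟩ := hsq
    have hs0 : s ≠ 0 := by
      intro h
      rw [h, mul_zero] at hs
      exact hA0 (by field_simp at hs; simpa using hs)
    obtain ⟨dA, hdA⟩ := mcong_diagonalize hcard A hAsymm
    obtain ⟨dB, hdB⟩ := mcong_diagonalize hcard B hBsymm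
    obtain ⟨uA, huA, hdetA⟩ := mcong_det hdA
    obtain ⟨uB, huB, hdetB⟩ := mcong_det hdB
    rw [Matrix.det_diagonal] at hdetA hdetB
    have hdAne : ∀ p, dA p ≠ 0 := by
      intro p
      have : ∏ q, dA q ≠ 0 := by
        rw [hdetA]
        exact mul_ne_zero hA0 (pow_ne_zero 2 huA)
      exact fun h0 => this (Finset.prod_eq_zero (Finset.mem_univ p) h0)
    have hdBne : ∀ p, dB p ≠ 0 := by
      intro p
      have : ∏ q, dB q ≠ 0 := by
        rw [hdetB]
        exact mul_ne_zero hB0 (pow_ne_zero 2 huB)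
      exact fun h0 => this (Finset.prod_eq_zero (Finset.mem_univ p) h0)
    obtain ⟨m, rfl⟩ : ∃ m, n = m + 1 := ⟨n - 1, (Nat.succ_pred_eq_of_pos hn).symm⟩
    set i₀ : Fin (m + 1) := 0 with hi₀def
    have hnormA := mcong_normalize hcard (Finset.univ.erase i₀)
      i₀ (Finset.notMem_erase i₀ _) dA hdAne
      (fun p hp hpi₀ => absurd (Finset.mem_erase.2 ⟨hpi₀, Finset.mem_univ p⟩) hp)
    have hnormB := mcong_normalize hcard (Finset.univ.erase i₀)
      i₀ (Finset.notMem_erase i₀ _) dB hdBne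
      (fun p hp hpi₀ => absurd (Finset.mem_erase.2 ⟨hpi₀, Finset.mem_univ p⟩) hp)
    set t : F := s * uA * uB⁻¹ with ht
    have ht0 : t ≠ 0 := mul_ne_zero (mul_ne_zero hs0 huA) (inv_ne_zero huB)
    have hscale := mcong_diag_scale (fun p => if p = i₀ then ∏ q, dB q else 1)
      (fun p => if p = i₀ then t else 1)
      (fun p => by split; exacts [ht0, one_ne_zero])
    have hfun : (fun p => (if p = i₀ then t else 1) ^ 2 * (if p = i₀ then ∏ q, dB q else 1))
        = fun p => if p = i₀ then ∏ q, dA q else 1 := by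
      funext p
      by_cases hp : p = i₀
      · simp only [if_pos hp]
        rw [hdetA, hdetB, ht]
        have huB2 : uB⁻¹ ^ 2 * uB ^ 2 = 1 := by
          rw [← mul_pow, inv_mul_cancel₀ huB, one_pow]
        rw [div_eq_iff hB0] at hs
        calc (s * uA * uB⁻¹) ^ 2 * (B.det * uB ^ 2)
            = s * s * B.det * uA ^ 2 * (uB⁻¹ ^ 2 * uB ^ 2) := by ring
          _ = s * s * B.det * uA ^ 2 := by rw [huB2, mul_one]
          _ = A.det * uA ^ 2 := by rw [← hs]
      · simp [if_neg hp]
    rw [hfun] at hscale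
    exact mcong_trans (mcong_trans hdA hnormA)
      (mcong_symm (mcong_trans (mcong_trans hdB hnormB) hscale))
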